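/- Let A, B₁, …, B_N be n×n matrices over a field with A invertible. Then for all nonnegative integers l, m₁, …, m_N, the duality relation Z_{l,m₁,…,m_N}(A, B₁,…,B_N) = det(A) · Z_{n−l−Σᵢmᵢ, m₁,…,m_N}(A⁻¹, A⁻¹B₁, …, A⁻¹B_N) holds (where by convention an invariant with a negative first index is zero). -/

import Mathlib

open Matrix Polynomial

noncomputable def genZ {R : Type*} [CommRing R] {n N : ℕ}
    (Xs : Fin N → Matrix (Fin n) (Fin n) R) (m : Fin N → ℕ) : R :=
  MvPolynomial.coeff (Finsupp.equivFunOnFinite.symm m)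
    (Matrix.det (1 + ∑ i : Fin N,
      (MvPolynomial.X i : MvPolynomial (Fin N) R) • (Xs i).map MvPolynomial.C))

lemma cons_finsupp {N : ℕ} (l : ℕ) (m : Fin N → ℕ) :
    (Finsupp.equivFunOnFinite.symm (Fin.cons l m) : Fin (N+1) →₀ ℕ)
      = Finsupp.cons l (Finsupp.equivFunOnFinite.symm m) := by
  ext i
  refine Fin.cases ?_ ?_ i <;> simp

lemma finSuccEquiv_C' {K : Type*} [CommRing K] {N : ℕ} (a : K) :
    (MvPolynomial.finSuccEquiv K N) (MvPolynomial.C a) = Polynomial.C (MvPolynomial.C a) := by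
  simp [MvPolynomial.finSuccEquiv_apply]

lemma genZ_cons {K : Type*} [Field K] {n N : ℕ}
    (X0 : Matrix (Fin n) (Fin n) K) (Xs : Fin N → Matrix (Fin n) (Fin n) K)
    (l : ℕ) (m : Fin N → ℕ) :
    genZ (Fin.cons X0 Xs) (Fin.cons l m) =
      MvPolynomial.coeff (Finsupp.equivFunOnFinite.symm m)
        (Polynomial.coeff
          (Matrix.det ((1 + (Polynomial.X : Polynomial (MvPolynomial (Fin N) K)) •
              X0.map (fun a : K => Polynomial.C (MvPolynomial.C a))
            + ∑ i : Fin N, (Polynomial.C (MvPolynomial.X i) : Polynomial (MvPolynomial (Fin N) K)) •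
              (Xs i).map (fun a : K => Polynomial.C (MvPolynomial.C a)) :
              Matrix (Fin n) (Fin n) (Polynomial (MvPolynomial (Fin N) K))))) l) := by
  rw [genZ, cons_finsupp, ← MvPolynomial.finSuccEquiv_coeff_coeff]
  congr 2
  rw [MvPolynomial.finSuccEquiv_apply, RingHom.map_det]
  congr 1
  ext i j
  simp [Matrix.map_apply, Matrix.add_apply, Matrix.sum_apply, Matrix.smul_apply,
    Matrix.one_apply, smul_eq_mul, map_add, map_sum, _root_.map_mul, apply_ite, _root_.map_one, _root_.map_zero,
    Fin.sum_univ_succ, Fin.cons_zero, Fin.cons_succ, add_assoc,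
    MvPolynomial.finSuccEquiv_X_zero, MvPolynomial.finSuccEquiv_X_succ, finSuccEquiv_C']

noncomputable def psiAux (K : Type*) [CommRing K] (N : ℕ) :
    MvPolynomial (Fin N) K →+* Polynomial (MvPolynomial (Fin N) K) :=
  MvPolynomial.eval₂Hom (Polynomial.C.comp MvPolynomial.C)
    (fun i => Polynomial.X * Polynomial.C (MvPolynomial.X i))

noncomputable def PsiAux (K : Type*) [CommRing K] (N : ℕ) :
    Polynomial (MvPolynomial (Fin N) K) →+* Polynomial (MvPolynomial (Fin N) K) :=
  Polynomial.eval₂RingHom (psiAux K N) Polynomial.X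

lemma psiAux_monomial {K : Type*} [CommRing K] {N : ℕ} (σ : Fin N →₀ ℕ) (c : K) :
    psiAux K N (MvPolynomial.monomial σ c)
      = Polynomial.X ^ (σ.sum fun _ k => k) * Polynomial.C (MvPolynomial.monomial σ c) := by
  rw [psiAux, MvPolynomial.eval₂Hom_monomial]
  rw [Finsupp.prod, Finsupp.sum]
  simp only [mul_pow, Finset.prod_mul_distrib, ← Polynomial.C_pow, Finset.prod_pow_eq_pow_sum,
    ← map_prod, RingHom.coe_comp, Function.comp_apply]
  rw [MvPolynomial.monomial_eq, Finsupp.prod]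
  rw [_root_.map_mul, mul_left_comm]

lemma PsiAux_coeff_coeff {K : Type*} [CommRing K] {N : ℕ}
    (q : Polynomial (MvPolynomial (Fin N) K)) (m' : Fin N →₀ ℕ) (j : ℕ) :
    MvPolynomial.coeff m' ((PsiAux K N q).coeff j)
      = if (m'.sum fun _ k => k) ≤ j then
          MvPolynomial.coeff m' (q.coeff (j - m'.sum fun _ k => k)) else 0 := by
  induction q using Polynomial.induction_on' with
  | add p q hp hq =>
      simp only [map_add, Polynomial.coeff_add, MvPolynomial.coeff_add, hp, hq]
      split_ifs <;> simp
  | monomial k r =>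
      induction r using MvPolynomial.induction_on' with
      | monomial σ c =>
          rw [show (Polynomial.monomial k) ((MvPolynomial.monomial σ) c)
              = Polynomial.C ((MvPolynomial.monomial σ) c) * Polynomial.X ^ k from by
            rw [Polynomial.C_mul_X_pow_eq_monomial]]
          rw [_root_.map_mul, map_pow, PsiAux, Polynomial.coe_eval₂RingHom, Polynomial.eval₂_C,
            Polynomial.eval₂_X, psiAux_monomial]
          rw [mul_comm (Polynomial.X ^ (σ.sum fun _ k => k)), mul_assoc, ← pow_add,
            Polynomial.C_mul_X_pow_eq_monomial, Polynomial.C_mul_X_pow_eq_monomial]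
          simp only [Polynomial.coeff_monomial, apply_ite (MvPolynomial.coeff m'),
            MvPolynomial.coeff_monomial, MvPolynomial.coeff_zero]
          by_cases hσ : σ = m'
          · subst hσ
            simp only [if_pos rfl]
            split_ifs <;> first | rfl | omega
          · simp [hσ]
      | add p q hp hq =>
          simp only [map_add, Polynomial.coeff_add, MvPolynomial.coeff_add, hp, hq]
          split_ifs <;> simp

set_option maxRecDepth 10000 in
set_option maxHeartbeats 1000000 in
theorem genZ_duality
    {K : Type*} [Field K] {n N : ℕ}
    (A : Matrix (Fin n) (Fin n) K) (hA : IsUnit A)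
    (Bs : Fin N → Matrix (Fin n) (Fin n) K) (l : ℕ) (m : Fin N → ℕ) :
    genZ (Fin.cons A Bs) (Fin.cons l m)
      = if l + ∑ i : Fin N, m i ≤ n then
          A.det * genZ (Fin.cons A⁻¹ (fun i => A⁻¹ * Bs i))
            (Fin.cons (n - l - ∑ i : Fin N, m i) m)
        else 0 := by
  classical
  have hdet : IsUnit A.det := (Matrix.isUnit_iff_isUnit_det A).mp hA
  have hAAinv : A * A⁻¹ = 1 := Matrix.mul_nonsing_inv A hdet
  rw [genZ_cons, genZ_cons]
  set R := MvPolynomial (Fin N) K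
  set S := Polynomial R
  set e' : K → S := fun a => Polynomial.C (MvPolynomial.C a) with he'
  set sm := ∑ i : Fin N, m i with hsm
  set m' : Fin N →₀ ℕ := Finsupp.equivFunOnFinite.symm m with hm'def
  have hm'sum : (m'.sum fun _ k => k) = sm := by
    rw [Finsupp.sum_fintype _ _ (fun i => rfl)]
    simp [hm'def, hsm]
  set W : Matrix (Fin n) (Fin n) R :=
    (A⁻¹).map MvPolynomial.C
      + ∑ i : Fin N, (MvPolynomial.X i : R) • ((A⁻¹ * Bs i).map MvPolynomial.C) with hW
  -- the dual-side determinant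
  set Q : S := Matrix.det (1 + (Polynomial.X : S) • (A⁻¹).map e'
      + ∑ i : Fin N, (Polynomial.C (MvPolynomial.X i) : S) • ((A⁻¹ * Bs i).map e')) with hQ
  -- factorization
  have hWmap : W.map Polynomial.C
      = (A⁻¹).map e' + ∑ i : Fin N,
          (Polynomial.C (MvPolynomial.X i) : S) • ((A⁻¹ * Bs i).map e') := by
    refine Matrix.ext fun i j => ?_
    simp [hW, Matrix.map_apply, Matrix.add_apply, Matrix.sum_apply, Matrix.smul_apply,
      smul_eq_mul, _root_.map_mul, map_add, map_sum, he', -Matrix.map_mul]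
  have hmapmul : ∀ (M1 M2 : Matrix (Fin n) (Fin n) K),
      M1.map e' * M2.map e' = (M1 * M2).map e' := by
    intro M1 M2
    refine Matrix.ext fun i j => ?_
    simp only [Matrix.mul_apply, Matrix.map_apply, he', map_sum, _root_.map_mul]
  have hfact : (1 + (Polynomial.X : S) • A.map e'
        + ∑ i : Fin N, (Polynomial.C (MvPolynomial.X i) : S) • ((Bs i).map e'))
      = A.map e' * ((Polynomial.X : S) • 1 + W.map Polynomial.C) := by
    rw [hWmap, mul_add, mul_add, Matrix.mul_smul, mul_one]
    have h1 : A.map e' * (A⁻¹).map e' = 1 := by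
      rw [hmapmul, hAAinv]
      ext i j
      simp [Matrix.map_apply, Matrix.one_apply, apply_ite, he']
    rw [h1]
    have h2 : ∀ i : Fin N, A.map e' * ((Polynomial.C (MvPolynomial.X i) : S) •
        ((A⁻¹ * Bs i).map e')) = (Polynomial.C (MvPolynomial.X i) : S) • ((Bs i).map e') := by
      intro i
      rw [Matrix.mul_smul, hmapmul, ← Matrix.mul_assoc, hAAinv, Matrix.one_mul]
    rw [Finset.mul_sum]
    simp only [h2]
    abel
  -- charpoly of -W
  have hchar : Matrix.charpoly (-W) = Matrix.det ((Polynomial.X : S) • 1 + W.map Polynomial.C) := by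
    rw [Matrix.charpoly]
    congr 1
    ext i j
    simp [Matrix.charmatrix, Matrix.smul_apply, Matrix.one_apply, Matrix.map_apply,
      Matrix.diagonal_apply, apply_ite, mul_ite, sub_eq_add_neg]
  have hdetA : Matrix.det (A.map e') = Polynomial.C (MvPolynomial.C A.det) := by
    rw [show A.map e' = (Polynomial.C.comp MvPolynomial.C : K →+* S).mapMatrix A from rfl,
      ← RingHom.map_det]
    rfl
  have hP : Matrix.det (1 + (Polynomial.X : S) • A.map e'
        + ∑ i : Fin N, (Polynomial.C (MvPolynomial.X i) : S) • ((Bs i).map e'))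
      = Polynomial.C (MvPolynomial.C A.det) * Matrix.charpoly (-W) := by
    rw [hfact, Matrix.det_mul, hdetA, hchar]
  -- charpolyRev of -W is PsiAux of Q
  have hPsiX : PsiAux K N (Polynomial.X) = Polynomial.X := by
    simp [PsiAux]
  have hPsiC : ∀ a : K, PsiAux K N (Polynomial.C (MvPolynomial.C a))
      = Polynomial.C (MvPolynomial.C a) := by
    intro a; simp [PsiAux, psiAux]
  have hPsiXi : ∀ i : Fin N, PsiAux K N (Polynomial.C (MvPolynomial.X i))
      = Polynomial.X * Polynomial.C (MvPolynomial.X i) := by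
    intro i; simp [PsiAux, psiAux]
  have hQrev : Matrix.charpolyRev (-W) = PsiAux K N Q := by
    rw [hQ, Matrix.charpolyRev, RingHom.map_det]
    congr 1
    refine Matrix.ext fun i j => ?_
    simp only [RingHom.mapMatrix_apply, Matrix.map_apply, Matrix.add_apply, Matrix.sub_apply,
      Matrix.sum_apply, Matrix.smul_apply, Matrix.one_apply, Matrix.neg_apply, smul_eq_mul,
      map_add, map_sum, _root_.map_mul, _root_.map_one, map_neg, apply_ite (PsiAux K N),
      _root_.map_zero, hPsiX, hPsiC, hPsiXi, hW, he']
    rw [mul_neg, sub_neg_eq_add, mul_add, Finset.mul_sum]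
    simp only [mul_assoc, add_assoc]
  rw [hP, Polynomial.coeff_C_mul, MvPolynomial.coeff_C_mul]
  by_cases hl : l ≤ n
  · have hco : (Matrix.charpoly (-W)).coeff l = (PsiAux K N Q).coeff (n - l) := by
      rw [← hQrev, ← Matrix.reverse_charpoly, Polynomial.coeff_reverse,
        Matrix.charpoly_natDegree_eq_dim, Fintype.card_fin, Polynomial.revAt_le (Nat.sub_le n l)]
      congr 1
      omega
    rw [hco, PsiAux_coeff_coeff, hm'sum]
    by_cases hc : l + sm ≤ n
    · rw [if_pos (by omega : sm ≤ n - l), if_pos hc]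
    · rw [if_neg (by omega : ¬ sm ≤ n - l), if_neg hc, mul_zero]
  · have hz : (Matrix.charpoly (-W)).coeff l = 0 :=
      Polynomial.coeff_eq_zero_of_natDegree_lt
        (by rw [Matrix.charpoly_natDegree_eq_dim, Fintype.card_fin]; omega)
    rw [hz, if_neg (by omega)]
    simp
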